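/- Let X, Y be Banach spaces, Ω ⊆ X open, f : Ω → Y continuous with continuous Fréchet derivative f′, and F : X ⇉ Y a set-valued mapping. Suppose x₀ ∈ Ω and the mapping L_f(x₀, ·) is strongly regular at x₁ for 0 with Lipschitz constant λ > 0. Then there exist constants r_{x₁} > 0, r₀ > 0 and r_{x₀} > 0 with B(x₀, r_{x₀}) ⊆ Ω such that for each x ∈ B(x₀, r_{x₀}): λ‖f′(x) − f′(x₀)‖ < 1; for each z ∈ B(0, r₀) the set L_f(x, z)⁻¹ ∩ B(x₁, r_{x₁}) is a singleton {s_x(z)}; and ‖s_x(u) − s_x(v)‖ ≤ (λ/(1 − λ‖f′(x) − f′(x₀)‖))‖u − v‖ for all u, v ∈ B(0, r₀). -/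

import Mathlib

open Metric Set Filter
open scoped NNReal

set_option maxHeartbeats 1000000

/-- Corollary `cor:ban`: if the partial linearization `L_f(x₀,·)` is strongly regular at
`x₁` for `0` with Lipschitz constant `lam`, then there are radii `r_{x₁}, r₀, r_{x₀}`
such that for every `x ∈ B(x₀,r_{x₀})` the mapping `z ↦ L_f(x,z)⁻¹ ∩ B(x₁,r_{x₁})` is
single-valued on `B(0,r₀)` and Lipschitz with modulus `lam/(1 - lam‖f'(x)-f'(x₀)‖)`. -/
theorem stmt2
    {X Y : Type*} [NormedAddCommGroup X] [NormedSpace ℝ X] [CompleteSpace X]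
    [NormedAddCommGroup Y] [NormedSpace ℝ Y] [CompleteSpace Y]
    (Ω : Set X) (hΩ : IsOpen Ω)
    (f : X → Y) (f' : X → X →L[ℝ] Y) (F : X → Set Y)
    (hfd : ∀ x ∈ Ω, HasFDerivAt f (f' x) x)
    (hf'c : ContinuousOn f' Ω)
    (x₀ x₁ : X) (hx₀ : x₀ ∈ Ω)
    (lam : ℝ) (hlam : 0 < lam)
    (hx₁sol : -(f x₀ + f' x₀ (x₁ - x₀)) ∈ F x₁)
    (hsr : ∃ r1 > (0:ℝ), ∃ ry > (0:ℝ), ∃ s : Y → X,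
      (∀ z ∈ ball (0:Y) ry,
        ({y : X | z - (f x₀ + f' x₀ (y - x₀)) ∈ F y} ∩ ball x₁ r1) = {s z} ∧
          s z ∈ ball x₁ r1) ∧
      (∀ u ∈ ball (0:Y) ry, ∀ v ∈ ball (0:Y) ry, ‖s u - s v‖ ≤ lam * ‖u - v‖)) :
    ∃ rx1 > (0:ℝ), ∃ r0 > (0:ℝ), ∃ rx0 > (0:ℝ), ball x₀ rx0 ⊆ Ω ∧
      ∀ x ∈ ball x₀ rx0,
        lam * ‖f' x - f' x₀‖ < 1 ∧
        ∃ s : Y → X,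
          (∀ z ∈ ball (0:Y) r0,
            ({y : X | z - (f x + f' x (y - x)) ∈ F y} ∩ ball x₁ rx1) = {s z}) ∧
          (∀ u ∈ ball (0:Y) r0, ∀ v ∈ ball (0:Y) r0,
            ‖s u - s v‖ ≤ lam / (1 - lam * ‖f' x - f' x₀‖) * ‖u - v‖) := by
  classical
  obtain ⟨r1, hr1, ry, hry, s, hsingle, hlip⟩ := hsr
  have h0ry : (0:Y) ∈ ball (0:Y) ry := mem_ball_self hry
  -- `x₁` is the solution for `z = 0`
  have hs0 : s 0 = x₁ := by
    have hset := (hsingle 0 h0ry).1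
    have hx₁mem : x₁ ∈ ({y : X | (0:Y) - (f x₀ + f' x₀ (y - x₀)) ∈ F y} ∩ ball x₁ r1) :=
      ⟨by simpa using hx₁sol, mem_ball_self hr1⟩
    rw [hset] at hx₁mem
    exact hx₁mem.symm
  set rx1 : ℝ := r1 / 2 with hrx1def
  have hrx1 : 0 < rx1 := by positivity
  set M : ℝ := rx1 + ‖x₁ - x₀‖ with hMdef
  have hM : 0 < M := by positivity
  set c : ℝ := min ry (rx1 / lam) / 2 with hcdef
  have hc : 0 < c := by
    have h1 := lt_min hry (div_pos hrx1 hlam)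
    rw [hcdef]; linarith
  have hcry : c < ry := by
    have h1 := min_le_left ry (rx1 / lam)
    rw [hcdef]; linarith
  have hclam : lam * c ≤ rx1 / 2 := by
    have h1 := min_le_right ry (rx1 / lam)
    have h2 : lam * c ≤ lam * (rx1 / lam / 2) := by
      apply mul_le_mul_of_nonneg_left _ hlam.le
      rw [hcdef]; linarith
    have h3 : lam * (rx1 / lam / 2) = rx1 / 2 := by field_simp
    linarith
  set r0 : ℝ := c / 2 with hr0def
  have hr0 : 0 < r0 := by rw [hr0def]; linarith
  set ε : ℝ := c / (4 * (2 + M)) with hεdef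
  have h2M : (0:ℝ) < 4 * (2 + M) := by nlinarith
  have hε : 0 < ε := div_pos hc h2M
  have hεM : 2 * ε + M * ε = c / 4 := by
    rw [hεdef]; field_simp
  set ε' : ℝ := min 1 (min ε (1 / (2 * lam))) with hε'def
  have hε' : 0 < ε' := lt_min one_pos (lt_min hε (by positivity))
  have hε'1 : ε' ≤ 1 := min_le_left _ _
  have hε'ε : ε' ≤ ε := le_trans (min_le_right _ _) (min_le_left _ _)
  have hε'lam : ε' ≤ 1 / (2 * lam) := le_trans (min_le_right _ _) (min_le_right _ _)
  -- continuity at x₀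
  have hfc : ContinuousAt f x₀ := (hfd x₀ hx₀).continuousAt
  obtain ⟨δ₂, hδ₂, hfδ⟩ := Metric.continuousAt_iff.mp hfc ε hε
  have hf'ca : ContinuousAt f' x₀ := hf'c.continuousAt (hΩ.mem_nhds hx₀)
  obtain ⟨δ₁, hδ₁, hf'δ⟩ := Metric.continuousAt_iff.mp hf'ca ε' hε'
  obtain ⟨δ₃, hδ₃, hΩδ⟩ := Metric.isOpen_iff.mp hΩ x₀ hx₀
  set rx0 : ℝ := min (min δ₁ δ₂) (min δ₃ (ε / (1 + ‖f' x₀‖))) with hrx0def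
  have hrx0 : 0 < rx0 :=
    lt_min (lt_min hδ₁ hδ₂) (lt_min hδ₃ (div_pos hε (by positivity)))
  refine ⟨rx1, hrx1, r0, hr0, rx0, hrx0, ?_, ?_⟩
  · exact fun p hp => hΩδ (mem_of_mem_of_subset hp
      (ball_subset_ball (le_trans (min_le_right _ _) (min_le_left _ _))))
  intro x hx
  have hxδ₁ : dist x x₀ < δ₁ :=
    lt_of_lt_of_le hx (le_trans (min_le_left _ _) (min_le_left _ _))
  have hxδ₂ : dist x x₀ < δ₂ :=
    lt_of_lt_of_le hx (le_trans (min_le_left _ _) (min_le_right _ _))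
  have hΔ : ‖f' x - f' x₀‖ < ε' := by
    have := hf'δ hxδ₁
    rwa [dist_eq_norm] at this
  have hfx : ‖f x - f x₀‖ < ε := by
    have := hfδ hxδ₂
    rwa [dist_eq_norm] at this
  have hkx : lam * ‖f' x - f' x₀‖ < 1 / 2 := by
    have h1 : lam * ‖f' x - f' x₀‖ < lam * ε' := mul_lt_mul_of_pos_left hΔ hlam
    have h2 : lam * ε' ≤ lam * (1 / (2 * lam)) := mul_le_mul_of_nonneg_left hε'lam hlam.le
    have h3 : lam * (1 / (2 * lam)) = 1 / 2 := by field_simp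
    linarith
  refine ⟨by linarith, ?_⟩
  have hop : ‖f' x (x - x₀)‖ ≤ ε := by
    have hN : ‖f' x‖ ≤ ‖f' x₀‖ + 1 := by
      have h1 := norm_sub_norm_le (f' x) (f' x₀)
      linarith
    have hxr : ‖x - x₀‖ ≤ ε / (1 + ‖f' x₀‖) := by
      have h1 : dist x x₀ < ε / (1 + ‖f' x₀‖) :=
        lt_of_lt_of_le hx (le_trans (min_le_right _ _) (min_le_right _ _))
      rw [dist_eq_norm] at h1
      exact h1.le
    have hpos : (0:ℝ) < 1 + ‖f' x₀‖ := by positivity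
    calc ‖f' x (x - x₀)‖ ≤ ‖f' x‖ * ‖x - x₀‖ := (f' x).le_opNorm _
      _ ≤ (‖f' x₀‖ + 1) * (ε / (1 + ‖f' x₀‖)) :=
          mul_le_mul hN hxr (norm_nonneg _) (by positivity)
      _ = ε := by field_simp; ring
  -- bound on the auxiliary map g
  have hgb : ∀ z ∈ ball (0:Y) r0, ∀ y ∈ closedBall x₁ rx1,
      ‖z - (f x + f' x (y - x)) + (f x₀ + f' x₀ (y - x₀))‖ < c := by
    intro z hz y hy
    have hz' : ‖z‖ < r0 := by rwa [mem_ball_zero_iff] at hz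
    have hy' : ‖y - x₁‖ ≤ rx1 := by
      rw [mem_closedBall, dist_eq_norm] at hy; exact hy
    have hyx₀ : ‖y - x₀‖ ≤ M := by
      have h1 : y - x₀ = (y - x₁) + (x₁ - x₀) := by abel
      rw [h1, hMdef]
      exact le_trans (norm_add_le _ _) (by linarith [norm_add_le (y - x₁) (x₁ - x₀)])
    have hdecomp : z - (f x + f' x (y - x)) + (f x₀ + f' x₀ (y - x₀))
        = z - (f x - f x₀) - (f' x - f' x₀) (y - x₀) + f' x (x - x₀) := by
      simp only [ContinuousLinearMap.sub_apply, map_sub]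
      abel
    rw [hdecomp]
    have h1 : ‖(f' x - f' x₀) (y - x₀)‖ ≤ ε * M := by
      calc ‖(f' x - f' x₀) (y - x₀)‖ ≤ ‖f' x - f' x₀‖ * ‖y - x₀‖ :=
            (f' x - f' x₀).le_opNorm _
        _ ≤ ε * M := mul_le_mul (le_trans hΔ.le hε'ε) hyx₀ (norm_nonneg _) hε.le
    have ht1 := norm_add_le (z - (f x - f x₀) - (f' x - f' x₀) (y - x₀)) (f' x (x - x₀))
    have ht2 := norm_sub_le (z - (f x - f x₀)) ((f' x - f' x₀) (y - x₀))
    have ht3 := norm_sub_le z (f x - f x₀)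
    have hr0c : r0 = c / 2 := hr0def
    nlinarith [h1, hop, hz', hfx, hεM, hc]
  -- existence and uniqueness of the solution for every z
  have key : ∀ z ∈ ball (0:Y) r0,
      ∃ w : X, ({y : X | z - (f x + f' x (y - x)) ∈ F y} ∩ ball x₁ rx1) = {w}
        ∧ w ∈ closedBall x₁ rx1
        ∧ w = s (z - (f x + f' x (w - x)) + (f x₀ + f' x₀ (w - x₀))) := by
    intro z hz
    set g : X → Y := fun y => z - (f x + f' x (y - x)) + (f x₀ + f' x₀ (y - x₀)) with hgdef
    have hgball : ∀ y ∈ closedBall x₁ rx1, g y ∈ ball (0:Y) ry := by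
      intro y hy
      rw [mem_ball_zero_iff]
      exact lt_trans (hgb z hz y hy) hcry
    have hsg : ∀ y ∈ closedBall x₁ rx1, ‖s (g y) - x₁‖ < rx1 := by
      intro y hy
      have h1 := hlip (g y) (hgball y hy) 0 h0ry
      rw [hs0, sub_zero] at h1
      have h2 : lam * ‖g y‖ < lam * c := mul_lt_mul_of_pos_left (hgb z hz y hy) hlam
      linarith
    have hmemcb : ∀ y ∈ closedBall x₁ rx1, s (g y) ∈ closedBall x₁ rx1 := by
      intro y hy
      rw [mem_closedBall, dist_eq_norm]
      exact (hsg y hy).le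
    have hiff : ∀ y ∈ closedBall x₁ rx1,
        (z - (f x + f' x (y - x)) ∈ F y ↔ y = s (g y)) := by
      intro y hy
      have hyr1 : y ∈ ball x₁ r1 := by
        rw [mem_ball]
        rw [mem_closedBall] at hy
        rw [hrx1def] at hy
        linarith
      have hrw : z - (f x + f' x (y - x)) = g y - (f x₀ + f' x₀ (y - x₀)) := by
        rw [hgdef]; dsimp only; abel
      have hset := (hsingle (g y) (hgball y hy)).1
      constructor
      · intro hmem
        have hin : y ∈ ({u : X | g y - (f x₀ + f' x₀ (u - x₀)) ∈ F u} ∩ ball x₁ r1) :=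
          ⟨by rw [Set.mem_setOf_eq, ← hrw]; exact hmem, hyr1⟩
        rw [hset] at hin
        exact hin
      · intro hy'
        have hin : s (g y) ∈ ({u : X | g y - (f x₀ + f' x₀ (u - x₀)) ∈ F u} ∩ ball x₁ r1) := by
          rw [hset]; rfl
        have h3 := hin.1
        rw [Set.mem_setOf_eq, ← hy'] at h3
        rw [hrw]
        exact h3
    haveI : Nonempty ↥(closedBall x₁ rx1) := ⟨⟨x₁, mem_closedBall_self hrx1.le⟩⟩
    haveI : CompleteSpace ↥(closedBall x₁ rx1) :=
      (isClosed_closedBall : IsClosed (closedBall x₁ rx1)).completeSpace_coe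
    set Φ : ↥(closedBall x₁ rx1) → ↥(closedBall x₁ rx1) :=
      fun y => ⟨s (g ↑y), hmemcb ↑y y.2⟩ with hΦdef
    have hΦlip : LipschitzWith (1/2 : ℝ≥0) Φ := by
      apply LipschitzWith.of_dist_le_mul
      intro y y'
      have hΦy : (↑(Φ y) : X) = s (g ↑y) := rfl
      have hΦy' : (↑(Φ y') : X) = s (g ↑y') := rfl
      rw [Subtype.dist_eq, Subtype.dist_eq, hΦy, hΦy', dist_eq_norm, dist_eq_norm]
      have h1 := hlip (g ↑y) (hgball ↑y y.2) (g ↑y') (hgball ↑y' y'.2)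
      have hgd : g ↑y - g ↑y' = (f' x₀ - f' x) (↑y - ↑y') := by
        rw [hgdef]
        simp only [ContinuousLinearMap.sub_apply, map_sub]
        abel
      rw [hgd] at h1
      have h2 : ‖(f' x₀ - f' x) (↑y - ↑y' : X)‖ ≤ ‖f' x - f' x₀‖ * ‖(↑y - ↑y' : X)‖ := by
        have h3 := (f' x₀ - f' x).le_opNorm (↑y - ↑y' : X)
        rwa [norm_sub_rev (f' x₀)] at h3
      have hK : ((1/2 : ℝ≥0) : ℝ) = 1/2 := by norm_num
      rw [hK]
      nlinarith [norm_nonneg ((↑y : X) - ↑y'), mul_le_mul_of_nonneg_left h2 hlam.le]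
    have hcontr : ContractingWith (1/2 : ℝ≥0) Φ := ⟨by rw [← NNReal.coe_lt_coe]; push_cast; norm_num, hΦlip⟩
    set w : ↥(closedBall x₁ rx1) := ContractingWith.fixedPoint Φ hcontr with hwdef
    have hwfix : Φ w = w := hcontr.fixedPoint_isFixedPt
    have hw : (↑w : X) = s (g ↑w) := by
      conv_lhs => rw [← hwfix]
    refine ⟨↑w, ?_, w.2, by rw [hgdef] at hw; exact hw⟩
    ext y
    simp only [Set.mem_inter_iff, Set.mem_setOf_eq, Set.mem_singleton_iff]
    constructor
    · rintro ⟨hmem, hyb⟩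
      have hycb : y ∈ closedBall x₁ rx1 := ball_subset_closedBall hyb
      have hyfix : y = s (g y) := (hiff y hycb).mp hmem
      have hΦfix : Φ ⟨y, hycb⟩ = ⟨y, hycb⟩ := Subtype.ext hyfix.symm
      have huniq := hcontr.fixedPoint_unique (x := ⟨y, hycb⟩) hΦfix
      exact congrArg Subtype.val huniq
    · rintro rfl
      refine ⟨(hiff ↑w w.2).mpr hw, ?_⟩
      rw [mem_ball, dist_eq_norm, hw]
      exact hsg ↑w w.2
  choose! sx hsx using key
  refine ⟨sx, fun z hz => (hsx z hz).1, ?_⟩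
  intro u hu v hv
  obtain ⟨-, hucb, hufix⟩ := hsx u hu
  obtain ⟨-, hvcb, hvfix⟩ := hsx v hv
  have hgu : u - (f x + f' x (sx u - x)) + (f x₀ + f' x₀ (sx u - x₀)) ∈ ball (0:Y) ry := by
    rw [mem_ball_zero_iff]
    exact lt_trans (hgb u hu (sx u) hucb) hcry
  have hgv : v - (f x + f' x (sx v - x)) + (f x₀ + f' x₀ (sx v - x₀)) ∈ ball (0:Y) ry := by
    rw [mem_ball_zero_iff]
    exact lt_trans (hgb v hv (sx v) hvcb) hcry
  have h1 := hlip _ hgu _ hgv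
  rw [← hufix, ← hvfix] at h1
  have hgd : (u - (f x + f' x (sx u - x)) + (f x₀ + f' x₀ (sx u - x₀)))
      - (v - (f x + f' x (sx v - x)) + (f x₀ + f' x₀ (sx v - x₀)))
      = (u - v) + (f' x₀ - f' x) (sx u - sx v) := by
    simp only [ContinuousLinearMap.sub_apply, map_sub]
    abel
  rw [hgd] at h1
  have h2 : ‖(u - v) + (f' x₀ - f' x) (sx u - sx v)‖
      ≤ ‖u - v‖ + ‖f' x - f' x₀‖ * ‖sx u - sx v‖ := by
    refine le_trans (norm_add_le _ _) ?_
    have h3 := (f' x₀ - f' x).le_opNorm (sx u - sx v)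
    rw [norm_sub_rev (f' x₀)] at h3
    linarith
  have hpos : 0 < 1 - lam * ‖f' x - f' x₀‖ := by linarith
  rw [div_mul_eq_mul_div, le_div_iff₀ hpos]
  nlinarith [mul_le_mul_of_nonneg_left h2 hlam.le]
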